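/- For every t ∈ [0, 2π) and all M₁, M₂ ∈ L₀, one has ⟨ψ_t, (M₁ ⊗ M₂) ψ_t⟩ = ⟨φ_t, (M₁ ⊗ M₂) φ_t⟩. -/

import Mathlib

open Matrix Kronecker Real

/-- η = exp(iπ/4). -/
noncomputable def eta : ℂ := Complex.exp (Real.pi / 4 * Complex.I)

/-- U = diag(η, conj η) ∈ M₂(ℂ). -/
noncomputable def U : Matrix (Fin 2) (Fin 2) ℂ := !![eta, 0; 0, star eta]

/-- L₀ ⊂ M₄(ℂ): block matrices [[A, λU*], [λU, A]], A ∈ M₂(ℂ), λ ∈ ℂ,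
under the identification ℂ⁴ = ℂ² ⊕ ℂ². -/
noncomputable def L0 : Set (Matrix (Fin 4) (Fin 4) ℂ) :=
  {M | ∃ (A : Matrix (Fin 2) (Fin 2) ℂ) (l : ℂ),
    M = Matrix.reindex finSumFinEquiv finSumFinEquiv (Matrix.fromBlocks A (l • Uᴴ) (l • U) A)}

/-- φ_t = (|1⟩⊗|1⟩ + e^{it}|2⟩⊗|2⟩)/√2 ∈ ℂ⁴ ⊗ ℂ⁴, the tensor square being modelled as
functions on (Fin 4) × (Fin 4). -/
noncomputable def phiT (t : ℝ) : Fin 4 × Fin 4 → ℂ := fun p =>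
  ((if p = (0, 0) then 1 else 0) +
    Complex.exp (t * Complex.I) * (if p = (1, 1) then 1 else 0)) / Real.sqrt 2

/-- ψ_t = (|3⟩⊗|3⟩ + e^{it}|4⟩⊗|4⟩)/√2 ∈ ℂ⁴ ⊗ ℂ⁴. -/
noncomputable def psiT (t : ℝ) : Fin 4 × Fin 4 → ℂ := fun p =>
  ((if p = (2, 2) then 1 else 0) +
    Complex.exp (t * Complex.I) * (if p = (3, 3) then 1 else 0)) / Real.sqrt 2

lemma L0_entries {M : Matrix (Fin 4) (Fin 4) ℂ} (hM : M ∈ L0) :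
    M 2 2 = M 0 0 ∧ M 2 3 = M 0 1 ∧ M 3 2 = M 1 0 ∧ M 3 3 = M 1 1 := by
  obtain ⟨A, l, rfl⟩ := hM
  refine ⟨?_, ?_, ?_, ?_⟩ <;>
    simp [Matrix.reindex_apply, Matrix.fromBlocks] <;>
    rfl

lemma vec_decomp (a b : Fin 4 × Fin 4) (c : ℂ) :
    (fun p => ((if p = a then (1:ℂ) else 0) + c * (if p = b then 1 else 0)) / Real.sqrt 2)
    = ((Real.sqrt 2 : ℂ))⁻¹ • ((Pi.single a (1:ℂ) : (Fin 4 × Fin 4) → ℂ) + c • (Pi.single b (1:ℂ) : (Fin 4 × Fin 4) → ℂ)) := by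
  funext p
  simp [Pi.single_apply, div_eq_inv_mul, mul_add, mul_comm]

lemma quad (N : Matrix (Fin 4 × Fin 4) (Fin 4 × Fin 4) ℂ) (a b : Fin 4 × Fin 4) (c : ℂ) :
    star (fun p => ((if p = a then (1:ℂ) else 0) + c * (if p = b then 1 else 0)) / Real.sqrt 2) ⬝ᵥ
      N.mulVec (fun p => ((if p = a then (1:ℂ) else 0) + c * (if p = b then 1 else 0)) / Real.sqrt 2)
    = (N a a + c * N a b + star c * N b a + star c * c * N b b) / 2 := by
  rw [vec_decomp]
  have hs : star (Pi.single a (1:ℂ) : (Fin 4 × Fin 4) → ℂ) = Pi.single a 1 := by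
    funext p; simp [Pi.single_apply, apply_ite (star : ℂ → ℂ)]
  have hsb : star (Pi.single b (1:ℂ) : (Fin 4 × Fin 4) → ℂ) = Pi.single b 1 := by
    funext p; simp [Pi.single_apply, apply_ite (star : ℂ → ℂ)]
  have h2 : ((Real.sqrt 2 : ℂ))⁻¹ * ((Real.sqrt 2 : ℂ))⁻¹ = (2:ℂ)⁻¹ := by
    have h : (Real.sqrt 2) * (Real.sqrt 2) = 2 := Real.mul_self_sqrt (by norm_num)
    rw [← mul_inv]
    norm_cast
    rw [h]
    norm_num
  simp only [star_smul, star_add, hs, hsb, Complex.star_def, map_inv₀, Complex.conj_ofReal,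
    Matrix.mulVec_smul, Matrix.mulVec_add, Matrix.mulVec_single, smul_dotProduct,
    dotProduct_smul, add_dotProduct, dotProduct_add, single_dotProduct,
    Pi.add_apply, Pi.smul_apply, smul_eq_mul, Matrix.col_apply, MulOpposite.op_one, one_smul]
  rw [div_eq_mul_inv, ← h2]
  ring

set_option maxHeartbeats 1000000 in
/-- For every t ∈ [0, 2π) and all M₁, M₂ ∈ L₀, ⟨ψ_t, (M₁ ⊗ M₂)ψ_t⟩ = ⟨φ_t, (M₁ ⊗ M₂)φ_t⟩. -/
theorem psi_inner_kron_psi_eq_phi_inner_kron_phi (t : ℝ) (ht : t ∈ Set.Ico 0 (2 * π))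
    (M₁ M₂ : Matrix (Fin 4) (Fin 4) ℂ) (hM₁ : M₁ ∈ L0) (hM₂ : M₂ ∈ L0) :
    star (psiT t) ⬝ᵥ (M₁ ⊗ₖ M₂).mulVec (psiT t) = star (phiT t) ⬝ᵥ (M₁ ⊗ₖ M₂).mulVec (phiT t) := by
  obtain ⟨h1, h2, h3, h4⟩ := L0_entries hM₁
  obtain ⟨g1, g2, g3, g4⟩ := L0_entries hM₂
  rw [show psiT t = (fun p => ((if p = ((2:Fin 4),(2:Fin 4)) then (1:ℂ) else 0) + Complex.exp (t*Complex.I) * (if p = (3,3) then 1 else 0)) / Real.sqrt 2) from rfl,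
    show phiT t = (fun p => ((if p = ((0:Fin 4),(0:Fin 4)) then (1:ℂ) else 0) + Complex.exp (t*Complex.I) * (if p = (1,1) then 1 else 0)) / Real.sqrt 2) from rfl,
    quad, quad]
  simp only [Matrix.kroneckerMap_apply, h1, h2, h3, h4, g1, g2, g3, g4]
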